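/- Let (D_k, d_k) be a Hilbert complex: D_k are domains of closed operators d_k : D_k ⊆ H_k → H_{k+1} with range(d_k) ⊆ D_{k+1} and d_{k+1} ∘ d_k = 0. If each d_k has closed range and finite dimensional cohomology ker(d_k)/range(d_{k-1}), then there is an orthogonal (Kodaira) decomposition H_k = closure(range(d_{k-1})) ⊕ closure(range(d_k*)) ⊕ (ker(d_k) ∩ ker(d_{k-1}*)), and the third summand is isomorphic to the k-th cohomology of the complex. -/

import Mathlib

open ComplexInnerProductSpace in
/-- Kodaira decomposition for a Hilbert complex (stated in a fixed degree):
given closed densely defined operators `d₀ : H₀ → H₁`, `d₁ : H₁ → H₂` with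
`range d₀ ⊆ dom d₁`, `d₁ ∘ d₀ = 0`, closed ranges and finite dimensional cohomology,
the middle Hilbert space decomposes orthogonally as
`H₁ = closure (range d₀) ⊕ closure (range d₁*) ⊕ (ker d₁ ∩ ker d₀*)`, and the third
(harmonic) summand is isomorphic to the cohomology `ker d₁ / range d₀`. -/
theorem kodaira_decomposition
    {H₀ H₁ H₂ : Type*}
    [NormedAddCommGroup H₀] [InnerProductSpace ℂ H₀] [CompleteSpace H₀]
    [NormedAddCommGroup H₁] [InnerProductSpace ℂ H₁] [CompleteSpace H₁]
    [NormedAddCommGroup H₂] [InnerProductSpace ℂ H₂] [CompleteSpace H₂]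
    (d₀ : H₀ →ₗ.[ℂ] H₁) (d₁ : H₁ →ₗ.[ℂ] H₂)
    (hdense₀ : Dense (d₀.domain : Set H₀)) (hdense₁ : Dense (d₁.domain : Set H₁))
    (hclosed₀ : d₀.IsClosed) (hclosed₁ : d₁.IsClosed)
    (hmem : ∀ x : d₀.domain, d₀ x ∈ d₁.domain)
    (hcomplex : ∀ x : d₀.domain, d₁ ⟨d₀ x, hmem x⟩ = 0)
    (hrange₀ : IsClosed ((LinearMap.range d₀.toFun : Submodule ℂ H₁) : Set H₁))
    (hrange₁ : IsClosed ((LinearMap.range d₁.toFun : Submodule ℂ H₂) : Set H₂))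
    (hfin : FiniteDimensional ℂ
      (↥((LinearMap.ker d₁.toFun).map d₁.domain.subtype) ⧸
        ((LinearMap.range d₀.toFun).comap
          ((LinearMap.ker d₁.toFun).map d₁.domain.subtype).subtype))) :
    -- the three summands are pairwise orthogonal:
    (∀ x ∈ (LinearMap.range d₀.toFun).topologicalClosure,
      ∀ y ∈ (LinearMap.range d₁.adjoint.toFun).topologicalClosure, ⟪x, y⟫ = 0) ∧
    (∀ x ∈ (LinearMap.range d₀.toFun).topologicalClosure,
      ∀ y ∈ ((LinearMap.ker d₁.toFun).map d₁.domain.subtype ⊓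
              (LinearMap.ker d₀.adjoint.toFun).map d₀.adjoint.domain.subtype :
              Submodule ℂ H₁), ⟪x, y⟫ = 0) ∧
    (∀ x ∈ (LinearMap.range d₁.adjoint.toFun).topologicalClosure,
      ∀ y ∈ ((LinearMap.ker d₁.toFun).map d₁.domain.subtype ⊓
              (LinearMap.ker d₀.adjoint.toFun).map d₀.adjoint.domain.subtype :
              Submodule ℂ H₁), ⟪x, y⟫ = 0) ∧
    -- they span all of `H₁`:
    ((LinearMap.range d₀.toFun).topologicalClosure ⊔
      (LinearMap.range d₁.adjoint.toFun).topologicalClosure ⊔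
      ((LinearMap.ker d₁.toFun).map d₁.domain.subtype ⊓
        (LinearMap.ker d₀.adjoint.toFun).map d₀.adjoint.domain.subtype) = ⊤) ∧
    -- the harmonic summand is isomorphic to the cohomology `ker d₁ / range d₀`:
    Nonempty
      ((↥((LinearMap.ker d₁.toFun).map d₁.domain.subtype ⊓
          (LinearMap.ker d₀.adjoint.toFun).map d₀.adjoint.domain.subtype)) ≃ₗ[ℂ]
        (↥((LinearMap.ker d₁.toFun).map d₁.domain.subtype) ⧸
          ((LinearMap.range d₀.toFun).comap
            ((LinearMap.ker d₁.toFun).map d₁.domain.subtype).subtype))) := by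
  classical
  set R₀ : Submodule ℂ H₁ := LinearMap.range d₀.toFun with hR₀def
  set K₁ : Submodule ℂ H₁ := (LinearMap.ker d₁.toFun).map d₁.domain.subtype with hK₁def
  set N₀ : Submodule ℂ H₁ :=
    (LinearMap.ker d₀.adjoint.toFun).map d₀.adjoint.domain.subtype with hN₀def
  set R₁ : Submodule ℂ H₁ := LinearMap.range d₁.adjoint.toFun with hR₁def
  have hadj₀ := LinearPMap.adjoint_isFormalAdjoint hdense₀
  have hadj₁ := LinearPMap.adjoint_isFormalAdjoint hdense₁
  -- range d₀ ≤ ker d₁ (as submodule of H₁)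
  have hR₀K₁ : R₀ ≤ K₁ := by
    rintro x ⟨u, rfl⟩
    exact ⟨⟨d₀ u, hmem u⟩, by simpa [LinearMap.mem_ker] using hcomplex u, rfl⟩
  -- ker d₁ is closed in H₁
  have hK₁closed : IsClosed (K₁ : Set H₁) := by
    have hset : (K₁ : Set H₁) =
        (fun x : H₁ => ((x, (0 : H₂)) : H₁ × H₂)) ⁻¹' (d₁.graph : Set (H₁ × H₂)) := by
      ext x
      simp only [hK₁def, SetLike.mem_coe, Submodule.mem_map, LinearMap.mem_ker,
        Set.mem_preimage, LinearPMap.mem_graph_iff, Submodule.coe_subtype]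
      constructor
      · rintro ⟨y, hy, rfl⟩; exact ⟨y, rfl, hy⟩
      · rintro ⟨y, rfl, hy⟩; exact ⟨y, hy, rfl⟩
    rw [hset]
    exact hclosed₁.preimage (continuous_id.prodMk continuous_const)
  -- ker d₀* = (range d₀)ᗮ
  have hN₀eq : N₀ = R₀ᗮ := by
    apply le_antisymm
    · rintro y ⟨y', hy', rfl⟩
      rw [Submodule.mem_orthogonal]
      rintro u ⟨v, rfl⟩
      have h1 : ⟪d₀.adjoint y', v⟫ = ⟪(y' : H₁), d₀ v⟫ := hadj₀ y' v
      simp only [SetLike.mem_coe, LinearMap.mem_ker] at hy'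
      rw [show d₀.adjoint y' = 0 from hy', inner_zero_left] at h1
      rw [inner_eq_zero_symm]
      exact h1.symm
    · intro y hy
      have hy' : ∀ x : d₀.domain, (⟪y, d₀ x⟫ : ℂ) = 0 := by
        intro x
        exact (Submodule.mem_orthogonal' R₀ y).mp hy (d₀ x) ⟨x, rfl⟩
      have hyd : y ∈ d₀.adjoint.domain :=
        LinearPMap.mem_adjoint_domain_of_exists y
          ⟨0, fun x => by rw [inner_zero_left, hy' x]⟩
      refine ⟨⟨y, hyd⟩, ?_, rfl⟩
      simp only [SetLike.mem_coe, LinearMap.mem_ker]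
      exact LinearPMap.adjoint_apply_eq hdense₀ _ fun x => by
        rw [inner_zero_left, hy' x]
  -- range d₁* ⊥ ker d₁
  have hR₁K₁ : R₁ ≤ K₁ᗮ := by
    rintro _ ⟨v, rfl⟩
    rw [Submodule.mem_orthogonal']
    rintro u ⟨u', hu', rfl⟩
    have h1 : ⟪d₁.adjoint v, (u' : H₁)⟫ = ⟪(v : H₂), d₁ u'⟫ := hadj₁ v u'
    simp only [SetLike.mem_coe, LinearMap.mem_ker] at hu'
    show (⟪d₁.adjoint v, (u' : H₁)⟫ : ℂ) = 0
    rw [h1, show d₁ u' = 0 from hu', inner_zero_right]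
  -- the hard inclusion: (range d₁*)ᗮ ≤ ker d₁ (uses closedness of d₁)
  have hR₁orth : R₁ᗮ ≤ K₁ := by
    intro z hz
    set G : Submodule ℂ (WithLp 2 (H₁ × H₂)) :=
      d₁.graph.comap (WithLp.linearEquiv 2 ℂ (H₁ × H₂)).toLinearMap with hGdef
    have hGclosed : IsClosed (G : Set (WithLp 2 (H₁ × H₂))) := by
      have hset : (G : Set (WithLp 2 (H₁ × H₂))) =
          (WithLp.prodContinuousLinearEquiv 2 ℂ H₁ H₂) ⁻¹' (d₁.graph : Set (H₁ × H₂)) := rfl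
      rw [hset]
      exact hclosed₁.preimage (WithLp.prodContinuousLinearEquiv 2 ℂ H₁ H₂).continuous
    haveI : CompleteSpace G := hGclosed.completeSpace_coe
    have hzz : ((WithLp.equiv 2 (H₁ × H₂)).symm (z, 0)) ∈ Gᗮᗮ := by
      rw [Submodule.mem_orthogonal]
      intro w hw
      set a : H₁ := (WithLp.equiv 2 (H₁ × H₂) w).1 with hadef
      set b : H₂ := (WithLp.equiv 2 (H₁ × H₂) w).2 with hbdef
      have key : ∀ x : d₁.domain, (⟪(x : H₁), a⟫ : ℂ) + ⟪d₁ x, b⟫ = 0 := by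
        intro x
        have hxG : ((WithLp.equiv 2 (H₁ × H₂)).symm ((x : H₁), d₁ x)) ∈ G := d₁.mem_graph x
        have h2 := (Submodule.mem_orthogonal G w).mp hw _ hxG
        simp [WithLp.prod_inner_apply] at h2; exact h2
      have key' : ∀ x : d₁.domain, (⟪-a, (x : H₁)⟫ : ℂ) = ⟪b, d₁ x⟫ := by
        intro x
        have h2 := congrArg (starRingEnd ℂ) (key x)
        simp only [map_add, inner_conj_symm, map_zero] at h2
        rw [inner_neg_left]
        linear_combination -h2
      have hb : b ∈ d₁.adjoint.domain :=
        LinearPMap.mem_adjoint_domain_of_exists b ⟨-a, key'⟩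
      have hba : d₁.adjoint ⟨b, hb⟩ = -a :=
        LinearPMap.adjoint_apply_eq hdense₁ _ key'
      have ha : (⟪a, z⟫ : ℂ) = 0 := by
        have h3 := (Submodule.mem_orthogonal R₁ z).mp hz (d₁.adjoint ⟨b, hb⟩) ⟨⟨b, hb⟩, rfl⟩
        rw [hba, inner_neg_left, neg_eq_zero] at h3
        exact h3
      calc (⟪w, (WithLp.equiv 2 (H₁ × H₂)).symm (z, 0)⟫ : ℂ)
          = ⟪a, z⟫ + ⟪b, (0 : H₂)⟫ := by
            rw [WithLp.prod_inner_apply]; rfl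
        _ = 0 := by rw [ha, inner_zero_right, add_zero]
    rw [Submodule.orthogonal_orthogonal] at hzz
    have hmemG : ((z, (0 : H₂)) : H₁ × H₂) ∈ d₁.graph := hzz
    rw [LinearPMap.mem_graph_iff] at hmemG
    obtain ⟨x, hx1, hx2⟩ := hmemG
    refine ⟨x, ?_, hx1⟩
    simp only [SetLike.mem_coe, LinearMap.mem_ker]
    exact hx2
  -- closure of range d₁* is exactly (ker d₁)ᗮ
  have hK₁orth : K₁ᗮ = R₁.topologicalClosure := by
    apply le_antisymm
    · have h1 : K₁ᗮ ≤ R₁ᗮᗮ := Submodule.orthogonal_le hR₁orth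
      rwa [Submodule.orthogonal_orthogonal_eq_closure] at h1
    · exact Submodule.topologicalClosure_minimal _ hR₁K₁ K₁.isClosed_orthogonal
  have hR₀closure : R₀.topologicalClosure = R₀ :=
    le_antisymm (Submodule.topologicalClosure_minimal _ le_rfl hrange₀)
      R₀.le_topologicalClosure
  haveI : CompleteSpace R₀ := hrange₀.completeSpace_coe
  haveI : CompleteSpace K₁ := hK₁closed.completeSpace_coe
  refine ⟨?_, ?_, ?_, ?_, ?_⟩
  · -- closure R₀ ⊥ closure R₁
    intro x hx y hy
    rw [hR₀closure] at hx
    rw [← hK₁orth] at hy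
    exact (Submodule.mem_orthogonal K₁ y).mp hy x (hR₀K₁ hx)
  · -- closure R₀ ⊥ harmonic
    intro x hx y hy
    rw [hR₀closure] at hx
    have hyN : y ∈ R₀ᗮ := hN₀eq ▸ hy.2
    exact (Submodule.mem_orthogonal R₀ y).mp hyN x hx
  · -- closure R₁ ⊥ harmonic
    intro x hx y hy
    rw [← hK₁orth] at hx
    exact (Submodule.mem_orthogonal' K₁ x).mp hx y hy.1
  · -- the three pieces span H₁
    rw [hR₀closure, ← hK₁orth, hN₀eq]
    rw [eq_top_iff, ← Submodule.sup_orthogonal_of_hasOrthogonalProjection (K := K₁)]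
    apply sup_le
    · intro x hx
      have h1 : (Submodule.orthogonalProjection R₀ x : H₁) ∈ R₀ := (Submodule.orthogonalProjection R₀ x).2
      have h2 : x - (Submodule.orthogonalProjection R₀ x : H₁) ∈ R₀ᗮ :=
        Submodule.sub_starProjection_mem_orthogonal (K := R₀) x
      have h3 : x - (Submodule.orthogonalProjection R₀ x : H₁) ∈ K₁ := K₁.sub_mem hx (hR₀K₁ h1)
      have hxeq : x = (Submodule.orthogonalProjection R₀ x : H₁) +
          (x - (Submodule.orthogonalProjection R₀ x : H₁)) := by abel
      rw [hxeq]
      exact Submodule.add_mem _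
        (Submodule.mem_sup_left (Submodule.mem_sup_left h1))
        (Submodule.mem_sup_right ⟨h3, h2⟩)
    · exact le_sup_of_le_left le_sup_right
  · -- the harmonic part is isomorphic to the cohomology
    set p : Submodule ℂ K₁ := R₀.comap K₁.subtype with hpdef
    set q : Submodule ℂ K₁ := (K₁ ⊓ N₀).comap K₁.subtype with hqdef
    have hcompl : IsCompl p q := by
      constructor
      · rw [disjoint_iff_inf_le]
        rintro x ⟨hxp, hxq⟩
        have hx1 : (x : H₁) ∈ R₀ := hxp
        have hx2 : (x : H₁) ∈ R₀ᗮ := hN₀eq ▸ (hxq : (x : H₁) ∈ K₁ ⊓ N₀).2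
        have : (⟪(x : H₁), (x : H₁)⟫ : ℂ) = 0 :=
          (Submodule.mem_orthogonal' R₀ _).mp hx2 _ hx1
        have hx0 : (x : H₁) = 0 := inner_self_eq_zero.mp this
        have : x = 0 := Subtype.ext hx0
        simp [this]
      · rw [codisjoint_iff, eq_top_iff]
        rintro x -
        have hxK : (x : H₁) ∈ K₁ := x.2
        have h1 : (Submodule.orthogonalProjection R₀ (x : H₁) : H₁) ∈ R₀ :=
          (Submodule.orthogonalProjection R₀ (x : H₁)).2
        have h2 : (x : H₁) - (Submodule.orthogonalProjection R₀ (x : H₁) : H₁) ∈ R₀ᗮ :=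
          Submodule.sub_starProjection_mem_orthogonal (K := R₀) (x : H₁)
        have h3 : (x : H₁) - (Submodule.orthogonalProjection R₀ (x : H₁) : H₁) ∈ K₁ :=
          K₁.sub_mem hxK (hR₀K₁ h1)
        set u : K₁ := ⟨(Submodule.orthogonalProjection R₀ (x : H₁) : H₁), hR₀K₁ h1⟩ with hudef
        set v : K₁ := ⟨(x : H₁) - (Submodule.orthogonalProjection R₀ (x : H₁) : H₁), h3⟩ with hvdef
        have hup : u ∈ p := h1
        have hvq : v ∈ q := by
          refine Submodule.mem_comap.mpr ⟨h3, ?_⟩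
          rw [hN₀eq]
          exact h2
        have hxuv : x = u + v := by
          apply Subtype.ext
          simp [hudef, hvdef]
        rw [hxuv]
        exact Submodule.add_mem _ (Submodule.mem_sup_left hup) (Submodule.mem_sup_right hvq)
    exact ⟨((Submodule.comapSubtypeEquivOfLe
      (inf_le_left : K₁ ⊓ N₀ ≤ K₁)).symm).trans
      (Submodule.quotientEquivOfIsCompl p q hcompl).symm⟩
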